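/- Suppose the frozen triple (E,F,φ) of type (P_F,r) is τ'-stable, and let I• be the two-term complex [O_X(-n)^{⊕r} → F] in D^b(X) with O_X(-n)^{⊕r} in degree 0 and F in degree 1. Then Ext^k(I•, I•) = 0 for all k ≤ -1. -/

import Mathlib

/-!
STATEMENT 11. `D` models the bounded derived category `D^b(X)` of the Calabi-Yau threefold
`X` (a pretriangulated category).  `(E, F, φ)` is a `τ'`-stable frozen triple of type
`(P_F, r)` and `I•` is the two-term complex `[𝒪_X(-n)^{⊕r} → F]` with `𝒪_X(-n)^{⊕r}` in
degree 0 and `F` in degree 1; thus there are exact triangles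
`I• → 𝒪_X(-n)^{⊕r} → F → I•[1]` and `K → I• → Q[-1] → K[1]` with `K = ker φ`,
`Q = coker φ`.  `Er`, `Fobj`, `Kobj`, `Qobj`, `Icx` are the corresponding objects.  Since
these are sheaves, their negative Ext groups vanish (`hEE`, …, `hKF`); purity of
`𝒪_X(-n)^{⊕r}` gives `Hom(F, 𝒪_X(-n)^{⊕r}) = 0` (`hFE`); `τ'`-stability makes `Q`
zero-dimensional, and purity of `F` gives `Hom(Q, F) = 0` (`hQF`).  The theorem:
`Ext^k(I•, I•) = 0` for all `k ≤ -1`.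
-/

open CategoryTheory CategoryTheory.Limits CategoryTheory.Pretriangulated

universe v u

/-- If all maps `A ⟶ B⟦q-p⟧` vanish, then all maps `A⟦p⟧ ⟶ B⟦q⟧` vanish. -/
lemma shift_hom_zero_aux
    (D : Type u) [Category.{v} D] [Preadditive D] [HasShift D ℤ]
    [∀ n : ℤ, (shiftFunctor D n).Additive]
    (A B : D) (p q : ℤ)
    (h : ∀ g : A ⟶ (shiftFunctor D (q - p)).obj B, g = 0)
    (u : (shiftFunctor D p).obj A ⟶ (shiftFunctor D q).obj B) : u = 0 := by
  apply (shiftFunctor D (-p)).map_injective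
  have hv : (shiftFunctorCompIsoId D p (-p) (add_neg_cancel p)).inv.app A ≫
      (shiftFunctor D (-p)).map u ≫
      (shiftFunctorAdd' D q (-p) (q - p) (by ring)).inv.app B = 0 := h _
  have : (shiftFunctor D (-p)).map u =
      (shiftFunctorCompIsoId D p (-p) (add_neg_cancel p)).hom.app A ≫
        ((shiftFunctorCompIsoId D p (-p) (add_neg_cancel p)).inv.app A ≫
          (shiftFunctor D (-p)).map u ≫
          (shiftFunctorAdd' D q (-p) (q - p) (by ring)).inv.app B) ≫
        (shiftFunctorAdd' D q (-p) (q - p) (by ring)).hom.app B := by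
    simp
  rw [this, hv]
  simp

/-- If all maps `A ⟶ B⟦p+q⟧` vanish, then all maps `A ⟶ B⟦p⟧⟦q⟧` vanish. -/
lemma hom_shift_shift_zero_aux
    (D : Type u) [Category.{v} D] [Preadditive D] [HasShift D ℤ]
    (A B : D) (p q : ℤ)
    (h : ∀ g : A ⟶ (shiftFunctor D (p + q)).obj B, g = 0)
    (u : A ⟶ (shiftFunctor D q).obj ((shiftFunctor D p).obj B)) : u = 0 := by
  have hv : u ≫ (shiftFunctorAdd' D p q (p + q) rfl).inv.app B = 0 := h _
  have : u = (u ≫ (shiftFunctorAdd' D p q (p + q) rfl).inv.app B) ≫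
      (shiftFunctorAdd' D p q (p + q) rfl).hom.app B := by simp
  rw [this, hv, zero_comp]

theorem negative_ext_of_stable_frozen_triple_vanish
    (D : Type u) [Category.{v} D] [HasZeroObject D] [Preadditive D] [HasShift D ℤ]
    [∀ n : ℤ, (shiftFunctor D n).Additive] [Pretriangulated D]
    (r : ℕ) (hr : 0 < r)
    (Er Fobj Kobj Qobj Icx : D)   -- 𝒪_X(-n)^{⊕r}, F, K = ker φ, Q = coker φ, I•
    -- the exact triangle I• → 𝒪_X(-n)^{⊕r} → F → I•[1]:
    (a : Icx ⟶ Er) (b : Er ⟶ Fobj) (c : Fobj ⟶ (shiftFunctor D (1 : ℤ)).obj Icx)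
    (hT : Triangle.mk a b c ∈ distTriang D)
    -- the exact triangle K → I• → Q[-1] → K[1]:
    (k1 : Kobj ⟶ Icx) (k2 : Icx ⟶ (shiftFunctor D (-1 : ℤ)).obj Qobj)
    (k3 : (shiftFunctor D (-1 : ℤ)).obj Qobj ⟶ (shiftFunctor D (1 : ℤ)).obj Kobj)
    (hT2 : Triangle.mk k1 k2 k3 ∈ distTriang D)
    -- negative Ext's between the sheaves vanish (degree reasons):
    (hEE : ∀ k : ℤ, k < 0 → ∀ f : Er ⟶ (shiftFunctor D k).obj Er, f = 0)
    (hEF : ∀ k : ℤ, k < 0 → ∀ f : Er ⟶ (shiftFunctor D k).obj Fobj, f = 0)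
    (hFEneg : ∀ k : ℤ, k < 0 → ∀ f : Fobj ⟶ (shiftFunctor D k).obj Er, f = 0)
    (hFF : ∀ k : ℤ, k < 0 → ∀ f : Fobj ⟶ (shiftFunctor D k).obj Fobj, f = 0)
    (hKF : ∀ k : ℤ, k < 0 → ∀ f : Kobj ⟶ (shiftFunctor D k).obj Fobj, f = 0)
    -- purity of 𝒪_X(-n)^{⊕r}: Hom(F, 𝒪_X(-n)^{⊕r}) = 0
    (hFE : ∀ f : Fobj ⟶ Er, f = 0)
    -- τ'-stability (Q zero-dimensional) and purity of F: Hom(Q, F) = 0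
    (hQF : ∀ f : Qobj ⟶ Fobj, f = 0) :
    ∀ k : ℤ, k ≤ -1 → ∀ f : Icx ⟶ (shiftFunctor D k).obj Icx, f = 0 := by
  -- Hom(F, E⟦m⟧) = 0 for m ≤ 0
  have hFE0 : ∀ m : ℤ, m ≤ 0 → ∀ g : Fobj ⟶ (shiftFunctor D m).obj Er, g = 0 := by
    intro m hm g
    rcases lt_or_eq_of_le hm with h | h
    · exact hFEneg m h g
    · subst h
      have h0 : g ≫ (shiftFunctorZero D ℤ).hom.app Er = 0 := hFE _
      have : g = (g ≫ (shiftFunctorZero D ℤ).hom.app Er) ≫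
          (shiftFunctorZero D ℤ).inv.app Er := by simp
      rw [this, h0, zero_comp]
  -- Hom(I, E⟦m⟧) = 0 for m ≤ -1
  have hIE : ∀ m : ℤ, m ≤ -1 → ∀ g : Icx ⟶ (shiftFunctor D m).obj Er, g = 0 := by
    intro m hm g
    have hd := inv_rot_of_distTriang _ hT
    have h1 : (Triangle.mk a b c).invRotate.mor₁ ≫ g = 0 :=
      shift_hom_zero_aux D Fobj Er (-1) m
        (fun g' => hFE0 (m - (-1)) (by omega) g') _
    obtain ⟨g', hg'⟩ := Triangle.yoneda_exact₂ _ hd g h1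
    rw [hg', hEE m (by omega) g']; exact comp_zero
  -- Hom(I, F⟦m⟧) = 0 for m ≤ -2
  have hIF : ∀ m : ℤ, m ≤ -2 → ∀ g : Icx ⟶ (shiftFunctor D m).obj Fobj, g = 0 := by
    intro m hm g
    have hd := inv_rot_of_distTriang _ hT
    have h1 : (Triangle.mk a b c).invRotate.mor₁ ≫ g = 0 :=
      shift_hom_zero_aux D Fobj Fobj (-1) m
        (fun g' => hFF (m - (-1)) (by omega) g') _
    obtain ⟨g', hg'⟩ := Triangle.yoneda_exact₂ _ hd g h1
    rw [hg', hEF m (by omega) g']; exact comp_zero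
  -- main statement
  intro k hk f
  have hTk : (Triangle.shiftFunctor D k).obj (Triangle.mk a b c) ∈ distTriang D :=
    Triangle.shift_distinguished _ hT k
  have hd := inv_rot_of_distTriang _ hTk
  have h1 : f ≫ ((Triangle.shiftFunctor D k).obj (Triangle.mk a b c)).invRotate.mor₂ = 0 := by
    exact hIE k (by omega) _
  obtain ⟨g, hg⟩ := Triangle.coyoneda_exact₂ _ hd f h1
  have hg0 : g = 0 :=
    hom_shift_shift_zero_aux D Icx Fobj k (-1)
      (fun g' => hIF (k + (-1)) (by omega) g') g
  rw [hg, hg0]; exact zero_comp
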